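/- For every A > 0 there exist C > 0 and ε₀ > 0 such that for all ε ∈ (0, ε₀] and all (x, y) ∈ [−Aε, Aε] × ℝⁿ, setting u = F^ε(x,y) and v = G(x,y): (i) if x ≤ 0 then u = x; (ii) |y − v − u·θ(v)| ≤ Cε²; (iii) if x > 0 then |x − u·(1 + 2εβ(v))| ≤ Cε³. -/

import Mathlib

/-- `B^ε(y) = (1 − εβ(y))/(1 + εβ(y))`. -/
noncomputable def Beps {n : ℕ} (β : EuclideanSpace ℝ (Fin n) → ℝ) (ε : ℝ)
    (y : EuclideanSpace ℝ (Fin n)) : ℝ :=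
  (1 - ε * β y) / (1 + ε * β y)

/-- `F^ε(x,y) = x + x⁺·(B^ε(y) − 1)`. -/
noncomputable def Feps {n : ℕ} (β : EuclideanSpace ℝ (Fin n) → ℝ) (ε : ℝ)
    (x : ℝ) (y : EuclideanSpace ℝ (Fin n)) : ℝ :=
  x + max x 0 * (Beps β ε y - 1)

/-- `G(x,y) = y − x·θ(y)`. -/
noncomputable def Gfun {n : ℕ}
    (θ : EuclideanSpace ℝ (Fin n) → EuclideanSpace ℝ (Fin n))
    (x : ℝ) (y : EuclideanSpace ℝ (Fin n)) : EuclideanSpace ℝ (Fin n) :=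
  y - x • θ y

/- STATEMENT 6: For every A > 0 there exist C > 0 and ε₀ > 0 such that for all
ε ∈ (0, ε₀] and all (x, y) ∈ [−Aε, Aε] × ℝⁿ, setting u = F^ε(x,y) and v = G(x,y):
(i) if x ≤ 0 then u = x; (ii) |y − v − u·θ(v)| ≤ Cε²;
(iii) if x > 0 then |x − u·(1 + 2εβ(v))| ≤ Cε³. -/
set_option maxHeartbeats 1000000 in
theorem stmt_6 (n : ℕ) (hn : 1 ≤ n)
    (β : EuclideanSpace ℝ (Fin n) → ℝ)
    (hβ : ContDiff ℝ 1 β)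
    (hβbd : BddAbove (Set.range fun y => |β y|))
    (hβ'bd : BddAbove (Set.range fun y => ‖fderiv ℝ β y‖))
    (θ : EuclideanSpace ℝ (Fin n) → EuclideanSpace ℝ (Fin n))
    (hθ : ContDiff ℝ 1 θ)
    (hθbd : BddAbove (Set.range fun y => ‖θ y‖))
    (hθ'bd : BddAbove (Set.range fun y => ‖fderiv ℝ θ y‖)) :
    ∀ A > 0, ∃ C > 0, ∃ ε₀ > 0, ∀ ε : ℝ, 0 < ε → ε ≤ ε₀ →
      ∀ x : ℝ, x ∈ Set.Icc (-(A * ε)) (A * ε) → ∀ y : EuclideanSpace ℝ (Fin n),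
        (x ≤ 0 → Feps β ε x y = x) ∧
        ‖y - Gfun θ x y - Feps β ε x y • θ (Gfun θ x y)‖ ≤ C * ε ^ 2 ∧
        (0 < x →
          |x - Feps β ε x y * (1 + 2 * ε * β (Gfun θ x y))| ≤ C * ε ^ 3) := by

  intro A hA
  obtain ⟨M, hM⟩ := hβbd
  obtain ⟨Lb, hLb⟩ := hβ'bd
  obtain ⟨T, hT⟩ := hθbd
  obtain ⟨Lt, hLt⟩ := hθ'bd
  have hMy : ∀ z, |β z| ≤ M := fun z => hM (Set.mem_range_self z)
  have hLby : ∀ z, ‖fderiv ℝ β z‖ ≤ Lb := fun z => hLb (Set.mem_range_self z)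
  have hTy : ∀ z, ‖θ z‖ ≤ T := fun z => hT (Set.mem_range_self z)
  have hLty : ∀ z, ‖fderiv ℝ θ z‖ ≤ Lt := fun z => hLt (Set.mem_range_self z)
  have hM0 : 0 ≤ M := le_trans (abs_nonneg _) (hMy 0)
  have hLb0 : 0 ≤ Lb := le_trans (norm_nonneg _) (hLby 0)
  have hT0 : 0 ≤ T := le_trans (norm_nonneg _) (hTy 0)
  have hLt0 : 0 ≤ Lt := le_trans (norm_nonneg _) (hLty 0)
  have lipβ : ∀ a b, |β a - β b| ≤ Lb * ‖a - b‖ := by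
    intro a b
    have := Convex.norm_image_sub_le_of_norm_fderiv_le
      (f := β) (C := Lb) (fun z _ => (hβ.differentiable one_ne_zero).differentiableAt)
      (fun z _ => hLby z) convex_univ (Set.mem_univ b) (Set.mem_univ a)
    simpa [Real.norm_eq_abs] using this
  have lipθ : ∀ a b, ‖θ a - θ b‖ ≤ Lt * ‖a - b‖ := by
    intro a b
    exact Convex.norm_image_sub_le_of_norm_fderiv_le
      (f := θ) (C := Lt) (fun z _ => (hθ.differentiable one_ne_zero).differentiableAt)
      (fun z _ => hLty z) convex_univ (Set.mem_univ b) (Set.mem_univ a)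
  refine ⟨A^2*Lt*T + 4*A*M*T + 4*A*(A*Lb*T + M^2) + 1, by positivity,
    1/(2*(M+1)), by positivity, ?_⟩
  intro ε hε hε₀ x hx y
  have hεM : ε * M ≤ 1/2 := by
    have h1 : ε * M ≤ (1/(2*(M+1))) * M := by
      apply mul_le_mul_of_nonneg_right hε₀ hM0
    have h2 : (1/(2*(M+1))) * M ≤ 1/2 := by
      rw [div_mul_eq_mul_div, div_le_div_iff₀ (by positivity) (by norm_num)]
      nlinarith
    linarith
  have hD : ∀ z, (1:ℝ)/2 ≤ 1 + ε * β z := by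
    intro z
    have h1 : -(ε*M) ≤ ε * β z := by
      have := (abs_le.mp (hMy z)).1
      nlinarith
    linarith
  have hDne : (1:ℝ) + ε * β y ≠ 0 := by have := hD y; linarith
  have hxabs : |x| ≤ A * ε := abs_le.mpr ⟨hx.1, hx.2⟩
  set v := Gfun θ x y with hv
  have hyv : y - v = x • θ y := by
    simp only [hv, Gfun]; abel
  have hyvn : ‖y - v‖ ≤ A * ε * T := by
    rw [hyv, norm_smul, Real.norm_eq_abs]
    calc |x| * ‖θ y‖ ≤ (A*ε) * T := by
          apply mul_le_mul hxabs (hTy y) (norm_nonneg _) (by positivity)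
      _ = A * ε * T := by ring
  have hB1 : |Beps β ε y - 1| ≤ 4 * ε * M := by
    have hBeq : Beps β ε y - 1 = (-(2 * (ε * β y))) / (1 + ε * β y) := by
      unfold Beps; field_simp; ring
    rw [hBeq, abs_div]
    rw [div_le_iff₀ (by rw [abs_of_pos (by have := hD y; linarith)]; have := hD y; linarith)]
    rw [abs_of_pos (by have := hD y; linarith : (0:ℝ) < 1 + ε * β y)]
    have h1 : |(-(2 * (ε * β y)))| = 2 * ε * |β y| := by
      rw [abs_neg, abs_mul, abs_mul, abs_of_pos hε, abs_two]
      ring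
    rw [h1]
    have hb := hMy y
    have := hD y
    nlinarith [mul_le_mul_of_nonneg_left hb (by positivity : (0:ℝ) ≤ 2*ε),
      mul_nonneg (mul_nonneg hε.le hM0) (show (0:ℝ) ≤ 1 + ε * β y - 1/2 by linarith)]
  have hux : |Feps β ε x y - x| ≤ |x| * (4 * ε * M) := by
    have : Feps β ε x y - x = max x 0 * (Beps β ε y - 1) := by unfold Feps; ring
    rw [this, abs_mul]
    apply mul_le_mul _ hB1 (abs_nonneg _) (abs_nonneg _)
    rw [abs_le]
    constructor
    · have := abs_nonneg x; have := le_max_right x 0; linarith [neg_abs_le x]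
    · exact max_le (le_abs_self x) (abs_nonneg x)
  refine ⟨?_, ?_, ?_⟩
  · intro hx0
    unfold Feps
    rw [max_eq_right hx0]; ring
  · -- part (ii)
    set u := Feps β ε x y with hu
    have hdecomp : y - v - u • θ v = x • (θ y - θ v) + (x - u) • θ v := by
      rw [smul_sub, sub_smul]
      rw [hyv]; abel
    rw [hdecomp]
    have h1 : ‖x • (θ y - θ v)‖ ≤ (A*ε) * (Lt * (A * ε * T)) := by
      rw [norm_smul, Real.norm_eq_abs]
      apply mul_le_mul hxabs _ (norm_nonneg _) (by positivity)
      calc ‖θ y - θ v‖ ≤ Lt * ‖y - v‖ := lipθ y v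
        _ ≤ Lt * (A * ε * T) := by
            apply mul_le_mul_of_nonneg_left hyvn hLt0
    have h2 : ‖(x - u) • θ v‖ ≤ ((A*ε) * (4 * ε * M)) * T := by
      rw [norm_smul, Real.norm_eq_abs]
      apply mul_le_mul _ (hTy v) (norm_nonneg _) (by positivity)
      rw [abs_sub_comm]
      calc |u - x| ≤ |x| * (4 * ε * M) := hux
        _ ≤ (A*ε) * (4 * ε * M) := by
            apply mul_le_mul_of_nonneg_right hxabs (by positivity)
    calc ‖x • (θ y - θ v) + (x - u) • θ v‖
        ≤ ‖x • (θ y - θ v)‖ + ‖(x - u) • θ v‖ := norm_add_le _ _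
      _ ≤ (A*ε) * (Lt * (A * ε * T)) + ((A*ε) * (4 * ε * M)) * T := by linarith
      _ ≤ (A^2*Lt*T + 4*A*M*T + 4*A*(A*Lb*T + M^2) + 1) * ε ^ 2 := by
          have hnn : (0:ℝ) ≤ (4*A*(A*Lb*T + M^2) + 1) * ε^2 := by positivity
          nlinarith [hnn]
  · -- part (iii)
    intro hxpos
    have huB : Feps β ε x y = x * Beps β ε y := by
      unfold Feps
      rw [max_eq_left hxpos.le]; ring
    have key : x - Feps β ε x y * (1 + 2 * ε * β v)
        = x * (2 * ε * ((β y - β v) + ε * (β y * β v))) / (1 + ε * β y) := by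
      rw [huB]; unfold Beps; field_simp; ring
    rw [key, abs_div]
    have hDpos : (0:ℝ) < 1 + ε * β y := by have := hD y; linarith
    rw [abs_of_pos hDpos]
    have hden : |x * (2 * ε * ((β y - β v) + ε * (β y * β v)))| / (1 + ε * β y)
        ≤ |x * (2 * ε * ((β y - β v) + ε * (β y * β v)))| / (1/2) := by
      apply div_le_div_of_nonneg_left (abs_nonneg _) (by norm_num) (hD y)
    refine le_trans hden ?_
    rw [div_le_iff₀ (by norm_num : (0:ℝ) < 1/2)]
    have hbv : |β y - β v| ≤ Lb * (A * ε * T) := by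
      calc |β y - β v| ≤ Lb * ‖y - v‖ := lipβ y v
        _ ≤ Lb * (A * ε * T) := mul_le_mul_of_nonneg_left hyvn hLb0
    have hbb : |β y * β v| ≤ M^2 := by
      rw [abs_mul]
      nlinarith [hMy y, hMy v, abs_nonneg (β y), abs_nonneg (β v)]
    have hinner : |(β y - β v) + ε * (β y * β v)| ≤ Lb * (A * ε * T) + ε * M^2 := by
      calc |(β y - β v) + ε * (β y * β v)| ≤ |β y - β v| + |ε * (β y * β v)| := abs_add_le _ _
        _ ≤ Lb * (A * ε * T) + ε * M^2 := by
            rw [abs_mul, abs_of_pos hε]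
            have : ε * |β y * β v| ≤ ε * M^2 := mul_le_mul_of_nonneg_left hbb hε.le
            linarith
    have hfull : |x * (2 * ε * ((β y - β v) + ε * (β y * β v)))|
        ≤ (A * ε) * (2 * ε * (Lb * (A * ε * T) + ε * M^2)) := by
      rw [abs_mul, abs_mul, abs_mul, abs_of_pos hε]
      norm_num
      apply mul_le_mul hxabs _ (by positivity) (by positivity)
      apply mul_le_mul_of_nonneg_left hinner (by positivity)
    have hnn : (0:ℝ) ≤ (A^2*Lt*T + 4*A*M*T + 1) * ε^3 := by positivity
    nlinarith [hfull, hnn]
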